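/- Assume s : [0,1]² → Ï² is a Borel-measurable selection of P⁻¹, where P : Ï² → [0,1]² is the square of the projection p : Ï → [0,1]. For i,j ∈ {0,1} let Z_{ij} = {z ∈ [0,1]² : s(z) ∈ Ï_i × Ï_j}, where Ï_k = [0,1] × {k}. Then for every a ∈ ℝ, the intersection of the anti-diagonal line L_a = {⟨x,y⟩ : x + y = a} with Z_{00} is at most countable. -/

import Mathlib

/-- The split interval: `[0,1] × {0,1}` with the lexicographic order. -/
abbrev SplitInterval : Type := Set.Icc (0:ℝ) 1 ×ₗ Bool

instance : TopologicalSpace SplitInterval := Preorder.topology SplitInterval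

instance : OrderTopology SplitInterval := ⟨rfl⟩

/-- The projection `⟨x,i⟩ ↦ x` of the split interval onto the unit interval. -/
def splitProj : SplitInterval → Set.Icc (0:ℝ) 1 := fun a => (ofLex a).1

/-- The square `P = p × p` of the projection `p`. -/
def splitProjSq : SplitInterval × SplitInterval → Set.Icc (0:ℝ) 1 × Set.Icc (0:ℝ) 1 :=
  fun z => (splitProj z.1, splitProj z.2)

/-- If `s` is a Borel-measurable selection of `P⁻¹`, then for every
`a ∈ ℝ` the intersection of the line `x + y = a` with
`Z₀₀ = {z : s(z) ∈ Ï₀ × Ï₀}` is at most countable. -/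
theorem line_inter_Z00_countable
    (s : Set.Icc (0:ℝ) 1 × Set.Icc (0:ℝ) 1 → SplitInterval × SplitInterval)
    (hsel : ∀ z, splitProjSq (s z) = z)
    (hBorel : ∀ U : Set (SplitInterval × SplitInterval), IsOpen U → MeasurableSet (s ⁻¹' U))
    (a : ℝ) :
    Set.Countable {z : Set.Icc (0:ℝ) 1 × Set.Icc (0:ℝ) 1 |
      (z.1 : ℝ) + (z.2 : ℝ) = a ∧ (ofLex (s z).1).2 = false ∧ (ofLex (s z).2).2 = false} := by
  set E : Set (Set.Icc (0:ℝ) 1 × Set.Icc (0:ℝ) 1) :=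
    {z | (z.1 : ℝ) + (z.2 : ℝ) = a ∧ (ofLex (s z).1).2 = false ∧ (ofLex (s z).2).2 = false}
    with hEdef
  -- the anti-diagonal line is a measurable set
  have hline : MeasurableSet {z : Set.Icc (0:ℝ) 1 × Set.Icc (0:ℝ) 1 |
      (z.1 : ℝ) + (z.2 : ℝ) = a} := by
    have hm : Measurable fun z : Set.Icc (0:ℝ) 1 × Set.Icc (0:ℝ) 1 => (z.1 : ℝ) + (z.2 : ℝ) :=
      (measurable_subtype_coe.comp measurable_fst).add
        (measurable_subtype_coe.comp measurable_snd)
    exact hm (measurableSet_singleton a)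
  -- the first coordinates of `s z` are those of `z`
  have hsel1 : ∀ z : Set.Icc (0:ℝ) 1 × Set.Icc (0:ℝ) 1, (ofLex (s z).1).1 = z.1 := fun z =>
    congrArg Prod.fst (hsel z)
  have hsel2 : ∀ z : Set.Icc (0:ℝ) 1 × Set.Icc (0:ℝ) 1, (ofLex (s z).2).1 = z.2 := fun z =>
    congrArg Prod.snd (hsel z)
  -- KEY: every subset of E is measurable.
  have key : ∀ A : Set (Set.Icc (0:ℝ) 1 × Set.Icc (0:ℝ) 1), A ⊆ E → MeasurableSet A := by
    intro A hA
    have hWopen : IsOpen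
        (⋃ w ∈ A, Set.Iio (toLex (w.1, true)) ×ˢ Set.Iio (toLex (w.2, true))) :=
      isOpen_biUnion fun w _ => IsOpen.prod isOpen_Iio isOpen_Iio
    have hAeq : A = s ⁻¹' (⋃ w ∈ A, Set.Iio (toLex (w.1, true)) ×ˢ Set.Iio (toLex (w.2, true)))
        ∩ {z : Set.Icc (0:ℝ) 1 × Set.Icc (0:ℝ) 1 | (z.1 : ℝ) + (z.2 : ℝ) = a} := by
      ext z
      constructor
      · intro hz
        obtain ⟨hzl, h1, h2⟩ := hA hz
        refine ⟨Set.mem_biUnion hz ⟨?_, ?_⟩, hzl⟩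
        · show (s z).1 < toLex (z.1, true)
          have : toLex (ofLex (s z).1) < toLex (z.1, true) := by
            rw [Prod.Lex.lt_iff]
            right
            exact ⟨hsel1 z, by show (ofLex (s z).1).2 < true; rw [h1]; exact Bool.false_lt_true⟩
          simpa using this
        · show (s z).2 < toLex (z.2, true)
          have : toLex (ofLex (s z).2) < toLex (z.2, true) := by
            rw [Prod.Lex.lt_iff]
            right
            exact ⟨hsel2 z, by show (ofLex (s z).2).2 < true; rw [h2]; exact Bool.false_lt_true⟩
          simpa using this
      · rintro ⟨hzW, hzl⟩
        rw [Set.mem_preimage, Set.mem_iUnion₂] at hzW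
        obtain ⟨w, hwA, hw1, hw2⟩ := hzW
        -- from the lexicographic inequalities, z.1 ≤ w.1 and z.2 ≤ w.2 (as reals)
        have hle1 : (z.1 : ℝ) ≤ (w.1 : ℝ) := by
          have h1 : toLex (ofLex (s z).1) < toLex (w.1, true) := by simpa using hw1
          rw [Prod.Lex.lt_iff] at h1
          rcases h1 with h | h
          · exact le_of_lt (Subtype.coe_lt_coe.mpr (hsel1 z ▸ h))
          · exact le_of_eq (congrArg Subtype.val (hsel1 z ▸ h.1))
        have hle2 : (z.2 : ℝ) ≤ (w.2 : ℝ) := by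
          have h2 : toLex (ofLex (s z).2) < toLex (w.2, true) := by simpa using hw2
          rw [Prod.Lex.lt_iff] at h2
          rcases h2 with h | h
          · exact le_of_lt (Subtype.coe_lt_coe.mpr (hsel2 z ▸ h))
          · exact le_of_eq (congrArg Subtype.val (hsel2 z ▸ h.1))
        have hwl : (w.1 : ℝ) + (w.2 : ℝ) = a := (hA hwA).1
        have hzl' : (z.1 : ℝ) + (z.2 : ℝ) = a := hzl
        have he1 : (z.1 : ℝ) = (w.1 : ℝ) := by linarith
        have he2 : (z.2 : ℝ) = (w.2 : ℝ) := by linarith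
        have : z = w := Prod.ext (Subtype.ext he1) (Subtype.ext he2)
        rw [this]; exact hwA
    rw [hAeq]
    exact (hBorel _ hWopen).inter hline
  -- now suppose E is uncountable and derive a contradiction from cardinality
  by_contra hE
  have hEmeas : MeasurableSet E := key E (subset_refl E)
  haveI : PolishSpace (Set.Icc (0:ℝ) 1) := isClosed_Icc.polishSpace
  haveI : StandardBorelSpace (Set.Icc (0:ℝ) 1 × Set.Icc (0:ℝ) 1) := by infer_instance
  haveI : StandardBorelSpace E := hEmeas.standardBorel
  have hnc : ¬Countable E := by
    rwa [Set.countable_coe_iff]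
  -- Borel isomorphism with the Cantor space
  let e : (ℕ → Bool) ≃ᵐ E := (PolishSpace.measurableEquivNatBoolOfNotCountable hnc).symm
  let f : (ℕ → Bool) → Set.Icc (0:ℝ) 1 × Set.Icc (0:ℝ) 1 := fun x => (e x : _)
  have hfinj : Function.Injective f := fun x y h =>
    e.injective (Subtype.val_injective h)
  have hfrange : ∀ S : Set (ℕ → Bool), f '' S ⊆ E := by
    rintro S _ ⟨x, _, rfl⟩
    exact (e x).2
  -- injection from the power set of the Cantor space into the measurable sets
  let Φ : Set (ℕ → Bool) →
      {t : Set (Set.Icc (0:ℝ) 1 × Set.Icc (0:ℝ) 1) | MeasurableSet t} :=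
    fun S => ⟨f '' S, key _ (hfrange S)⟩
  have hΦinj : Function.Injective Φ := by
    intro S T h
    exact (Set.image_injective.mpr hfinj) (congrArg Subtype.val h)
  have h1 : Cardinal.mk (Set (ℕ → Bool)) ≤
      Cardinal.mk {t : Set (Set.Icc (0:ℝ) 1 × Set.Icc (0:ℝ) 1) | MeasurableSet t} :=
    Cardinal.mk_le_of_injective hΦinj
  -- the family of measurable sets of a standard Borel space has cardinality ≤ 𝔠
  obtain ⟨b, bct, hb⟩ :=
    (inferInstance :
      MeasurableSpace.CountablyGenerated (Set.Icc (0:ℝ) 1 × Set.Icc (0:ℝ) 1)).isCountablyGenerated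
  have h2 : Cardinal.mk {t : Set (Set.Icc (0:ℝ) 1 × Set.Icc (0:ℝ) 1) | MeasurableSet t} ≤
      Cardinal.continuum := by
    have hble : Cardinal.mk b ≤ Cardinal.continuum :=
      bct.le_aleph0.trans Cardinal.aleph0_le_continuum
    have := MeasurableSpace.cardinal_measurableSet_le_continuum
      (α := Set.Icc (0:ℝ) 1 × Set.Icc (0:ℝ) 1) hble
    rwa [← hb] at this
  -- but the power set of the Cantor space has cardinality 2 ^ 𝔠 > 𝔠
  have hcantor : Cardinal.mk (ℕ → Bool) = Cardinal.continuum := by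
    simp [Cardinal.mk_arrow]
  have h3 : Cardinal.mk (Set (ℕ → Bool)) = 2 ^ Cardinal.continuum := by
    rw [Cardinal.mk_set, hcantor]
  have : (2 : Cardinal) ^ Cardinal.continuum ≤ Cardinal.continuum := by
    rw [← h3]; exact h1.trans h2
  exact absurd this (not_le.mpr (Cardinal.cantor Cardinal.continuum))
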